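/- arXiv:2105.10964 — 3 statements merged into one kernel-verified Lean document; each statement's English description precedes it below -/
import Mathlib

section
/- Let G be a finite group, k a field of characteristic p, D a p-subgroup of G, and N a normal subgroup of G such that D is a Sylow p-subgroup of DN. Then the p'-part of the index |G : N_G(D)|, viewed as an element of k, equals the p'-part of the index |G/N : N_{G/N}(DN/N)| viewed as an element of k. -/
open Subgroup Pointwise

private lemma aux_norm_le {G : Type*} [Group G] (D N : Subgroup G) [N.Normal] :
    Subgroup.normalizer (D : Set G) ≤ Subgroup.normalizer ((D ⊔ N : Subgroup G) : Set G) := by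
  intro g hg
  have key : ∀ x ∈ D ⊔ N, ∀ g' ∈ Subgroup.normalizer (D : Set G), g' * x * g'⁻¹ ∈ D ⊔ N := by
    intro x hx g' hg'
    have hx' : x ∈ (D : Set G) * (N : Set G) := by
      rw [← Subgroup.mul_normal]; exact hx
    obtain ⟨d, hd, n, hn, rfl⟩ := hx'
    have h1 : g' * d * g'⁻¹ ∈ D := (Subgroup.mem_normalizer_iff.mp hg' d).mp hd
    have h2 : g' * n * g'⁻¹ ∈ N := ‹N.Normal›.conj_mem n hn g'
    have he : g' * (d * n) * g'⁻¹ = (g' * d * g'⁻¹) * (g' * n * g'⁻¹) := by group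
    rw [he]
    exact mul_mem ((le_sup_left : D ≤ D ⊔ N) h1) ((le_sup_right : N ≤ D ⊔ N) h2)
  rw [Subgroup.mem_normalizer_iff]
  intro x
  constructor
  · exact fun hx => key x hx g hg
  · intro hx
    have h := key _ hx g⁻¹ (inv_mem hg)
    have he : g⁻¹ * (g * x * g⁻¹) * g⁻¹⁻¹ = x := by group
    rwa [he] at h

private lemma aux_norm_subgroupOf {G : Type*} [Group G] {P K : Subgroup G} (h : P ≤ K) :
    (Subgroup.normalizer (P : Set G)).subgroupOf K = Subgroup.normalizer ((P.subgroupOf K : Subgroup K) : Set K) := by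
  ext x
  simp only [Subgroup.mem_subgroupOf, Subgroup.mem_normalizer_iff, Subgroup.coe_mul,
    InvMemClass.coe_inv]
  constructor
  · intro hx n
    exact hx ↑n
  · intro hx n
    constructor
    · intro hn
      exact (hx ⟨n, h hn⟩).mp hn
    · intro hn
      have hnK : (↑x : G) * n * (↑x)⁻¹ ∈ K := h hn
      have hnK' : n ∈ K := by
        have hm := K.mul_mem (K.mul_mem (K.inv_mem x.2) hnK) x.2
        have he : (↑x : G)⁻¹ * (↑x * n * (↑x)⁻¹) * ↑x = n := by group
        rwa [he] at hm
      exact (hx ⟨n, hnK'⟩).mpr hn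

private lemma aux_index_of_sup_eq_top {G : Type*} [Group G] [Finite G] {H K : Subgroup G}
    [K.Normal] (h : H ⊔ K = ⊤) : H.relIndex K = H.index := by
  have h1 : (H ⊓ K).relIndex K * K.index = (H ⊓ K).index :=
    Subgroup.relIndex_mul_index inf_le_right
  have h2 : (H ⊓ K).relIndex H * H.index = (H ⊓ K).index :=
    Subgroup.relIndex_mul_index inf_le_left
  have h3 : (H ⊓ K).relIndex H = K.index := by
    rw [Subgroup.inf_relIndex_left, ← Subgroup.relIndex_sup_right, h,
      Subgroup.relIndex_top_right]
  have h4 : H.relIndex K * K.index = H.index * K.index := by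
    rw [← Subgroup.inf_relIndex_right, h1, ← h2, h3, mul_comm]
  have hK : K.index ≠ 0 := Subgroup.index_ne_zero_of_finite
  exact Nat.eq_of_mul_eq_mul_right (Nat.pos_of_ne_zero hK) h4

/-- For `G` finite, `k` a field of characteristic `p`, `D` a `p`-subgroup of `G`
and `N` normal with `D` a Sylow `p`-subgroup of `DN`, the `p'`-part of `|G : N_G(D)|`
equals, in `k`, the `p'`-part of `|G/N : N_{G/N}(DN/N)|`. -/
theorem stmt_0 (p : ℕ) [Fact p.Prime] (k : Type*) [Field k] [CharP k p]
    (G : Type*) [Group G] [Fintype G] (D N : Subgroup G) [N.Normal]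
    (hD : IsPGroup p D)
    (hSyl : ¬ p ∣ (D.subgroupOf (D ⊔ N)).index) :
    (((Subgroup.normalizer (D : Set G)).index / p ^ ((Subgroup.normalizer (D : Set G)).index).factorization p : ℕ) : k)
      = (((Subgroup.normalizer ((D.map (QuotientGroup.mk' N) : Subgroup (G ⧸ N)) : Set (G ⧸ N))).index /
          p ^ ((Subgroup.normalizer ((D.map (QuotientGroup.mk' N) : Subgroup (G ⧸ N)) : Set (G ⧸ N))).index).factorization p : ℕ) : k) := by
  set M : Subgroup G := D ⊔ N with hMdef
  set B : Subgroup G := Subgroup.normalizer (M : Set G) with hBdef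
  have hAB : (Subgroup.normalizer (D : Set G)) ≤ B := aux_norm_le D N
  have hMB : M ≤ B := Subgroup.le_normalizer
  have hDM : D ≤ M := le_sup_left
  -- the right-hand side index equals the index of B = N_G(D ⊔ N)
  have hRHS : (Subgroup.normalizer ((D.map (QuotientGroup.mk' N) : Subgroup (G ⧸ N)) : Set (G ⧸ N))).index = B.index := by
    rw [← Subgroup.index_comap_of_surjective _ (QuotientGroup.mk'_surjective N),
      Subgroup.comap_normalizer_eq_of_surjective _ (QuotientGroup.mk'_surjective N),
      Subgroup.comap_map_eq, QuotientGroup.ker_mk']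
  -- the relative index of N_G(D) in B is the number of Sylow p-subgroups of M
  set M' : Subgroup B := M.subgroupOf B with hM'def
  haveI hM'norm : M'.Normal := Subgroup.normal_in_normalizer
  set P : Subgroup B := D.subgroupOf B with hPdef
  have hPM' : P ≤ M' := fun x hx => hDM hx
  have hPgroup : IsPGroup p (P.subgroupOf M') := (hD.comap_subtype).comap_subtype
  have hPindex : ¬ p ∣ (P.subgroupOf M').index := by
    have e1 : (P.subgroupOf M').index = P.relIndex M' := rfl
    rw [e1, hPdef, hM'def, Subgroup.relIndex_subgroupOf hMB]
    exact hSyl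
  set PS : Sylow p M' := hPgroup.toSylow hPindex with hPSdef
  have hPS : (PS : Subgroup M').map M'.subtype = P := by
    rw [hPSdef, IsPGroup.toSylow_coe, Subgroup.subgroupOf_map_subtype, inf_of_le_left hPM']
  have frat : (Subgroup.normalizer (P : Set B)) ⊔ M' = ⊤ := by
    rw [← hPS]
    exact Sylow.normalizer_sup_eq_top PS
  have hr1 : (Subgroup.normalizer (D : Set G)).relIndex B = Nat.card (Sylow p M') := by
    have e2 : (Subgroup.normalizer (D : Set G)).relIndex B = ((Subgroup.normalizer (D : Set G)).subgroupOf B).index := rfl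
    rw [e2, Subgroup.subgroupOf_normalizer_eq (Subgroup.le_normalizer.trans hAB), ← hPdef,
      ← aux_index_of_sup_eq_top frat]
    have e3 : (Subgroup.normalizer (P : Set B)).relIndex M' = ((Subgroup.normalizer (P : Set B)).subgroupOf M').index := rfl
    rw [e3, aux_norm_subgroupOf hPM']
    rw [Sylow.card_eq_index_normalizer PS, hPSdef]
    rfl
  have hr2 : (Subgroup.normalizer (D : Set G)).relIndex B ≡ 1 [MOD p] := by
    rw [hr1]; exact card_sylow_modEq_one p M'
  have hrp : ¬ p ∣ (Subgroup.normalizer (D : Set G)).relIndex B := by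
    rw [hr1]; exact not_dvd_card_sylow p M'
  have hmul : (Subgroup.normalizer (D : Set G)).relIndex B * B.index = (Subgroup.normalizer (D : Set G)).index :=
    Subgroup.relIndex_mul_index hAB
  rw [hRHS, ← hmul, Nat.ordCompl_mul, Nat.factorization_eq_zero_of_not_dvd hrp, pow_zero,
    Nat.div_one, Nat.cast_mul, CharP.natCast_eq_natCast' k p hr2, Nat.cast_one, one_mul]
end

section
/- Let G be a finite group, p a prime, D a p-subgroup of G, and N a normal subgroup of G such that D is a Sylow p-subgroup of DN. The map from the set of G-conjugates of D to the set of G/N-conjugates of DN/N, sending gDg^{-1} to (gN)(DN/N)(gN)^{-1}, is surjective, and the fiber over (gN)(DN/N)(gN)^{-1} is exactly the set of Sylow p-subgroups of gDNg^{-1}. -/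
open scoped Pointwise

section Aux

variable {G : Type*} [Group G]

lemma aux_map_conj (N : Subgroup G) [N.Normal] (x : G) (H : Subgroup G) :
    Subgroup.map (QuotientGroup.mk' N) (MulAut.conj x • H)
      = MulAut.conj ((x : G ⧸ N)) • Subgroup.map (QuotientGroup.mk' N) H := by
  rw [Subgroup.pointwise_smul_def, Subgroup.pointwise_smul_def]
  erw [Subgroup.map_map,
    Subgroup.map_map]
  congr 1

lemma aux_card_mul_relindex {H K : Subgroup G} (h : H ≤ K) :
    Nat.card H * H.relIndex K = Nat.card K := by
  rw [show Nat.card H = Nat.card (H.subgroupOf K) from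
    Nat.card_congr (Subgroup.subgroupOfEquivOfLe h).symm.toEquiv]
  exact Subgroup.card_mul_index (H.subgroupOf K)

end Aux

/-- For `D` a `p`-subgroup of the finite group `G` which is a Sylow `p`-subgroup
of `DN` (`N` normal), the map sending the `G`-conjugate `xDx⁻¹` of `D` to the `G/N`-conjugate
`(gN)(DN/N)(gN)⁻¹` of `DN/N` is surjective, and the fiber over `(gN)(DN/N)(gN)⁻¹` consists
exactly of the Sylow `p`-subgroups of `gDNg⁻¹`. -/
theorem stmt_1 (p : ℕ) [Fact p.Prime] (G : Type*) [Group G] [Fintype G]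
    (D N : Subgroup G) [N.Normal] (hD : IsPGroup p D)
    (hSyl : ¬ p ∣ (D.subgroupOf (D ⊔ N)).index) :
    (∀ g : G, ∃ x : G,
      Subgroup.map (QuotientGroup.mk' N) (MulAut.conj x • D)
        = MulAut.conj ((g : G ⧸ N)) • Subgroup.map (QuotientGroup.mk' N) D) ∧
    (∀ g x : G,
      Subgroup.map (QuotientGroup.mk' N) (MulAut.conj x • D)
          = MulAut.conj ((g : G ⧸ N)) • Subgroup.map (QuotientGroup.mk' N) D
        ↔ (MulAut.conj x • D ≤ MulAut.conj g • (D ⊔ N) ∧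
            ¬ p ∣ ((MulAut.conj x • D).subgroupOf (MulAut.conj g • (D ⊔ N))).index)) := by
  classical
  set Q : G →* G ⧸ N := QuotientGroup.mk' N with hQ
  have hkerQ : Q.ker = N := QuotientGroup.ker_mk' N
  have hmapN : Subgroup.map Q N = ⊥ := QuotientGroup.map_mk'_self N
  -- map Q (H ⊔ N) = map Q H
  have hmap_sup : ∀ H : Subgroup G, Subgroup.map Q (H ⊔ N) = Subgroup.map Q H := by
    intro H
    rw [Subgroup.map_sup, hmapN, sup_bot_eq]
  have hcomap_map : ∀ H : Subgroup G, Subgroup.comap Q (Subgroup.map Q H) = H ⊔ N := by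
    intro H
    rw [Subgroup.comap_map_eq, hkerQ]
  refine ⟨fun g => ⟨g, aux_map_conj N g D⟩, fun g x => ?_⟩
  set B : Subgroup G := MulAut.conj g • (D ⊔ N) with hB
  have hNB : N ≤ B := by
    have : MulAut.conj g • N ≤ B :=
      Subgroup.pointwise_smul_le_pointwise_smul_iff.mpr le_sup_right
    rwa [Subgroup.Normal.conj_smul_eq_self] at this
  have hBsupN : B ⊔ N = B := sup_eq_left.mpr hNB
  have hcardB : Nat.card B = Nat.card ↥(D ⊔ N) :=
    (Nat.card_congr (Subgroup.equivSMul (MulAut.conj g) (D ⊔ N)).toEquiv).symm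
  have hcardxD : Nat.card ↥(MulAut.conj x • D) = Nat.card D :=
    (Nat.card_congr (Subgroup.equivSMul (MulAut.conj x) D).toEquiv).symm
  have hcardDpos : 0 < Nat.card D := Nat.card_pos
  have hcardNpos : 0 < Nat.card N := Nat.card_pos
  -- RHS of the map equation is map Q B
  have hRHS : MulAut.conj ((g : G ⧸ N)) • Subgroup.map Q D = Subgroup.map Q B := by
    rw [hB, aux_map_conj N g (D ⊔ N), hmap_sup]
  -- key reformulation
  have hkey : Subgroup.map Q (MulAut.conj x • D)
        = MulAut.conj ((g : G ⧸ N)) • Subgroup.map Q D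
      ↔ (MulAut.conj x • D) ⊔ N = B := by
    rw [hRHS]
    constructor
    · intro h
      have := congrArg (Subgroup.comap Q) h
      rw [hcomap_map, hcomap_map] at this
      rw [this, hBsupN]
    · intro h
      rw [← hmap_sup (MulAut.conj x • D), h]
  rw [hkey]
  -- relindex of N in B is the card of map Q D, a power of p
  have hrelN : Nat.card N * N.relIndex B = Nat.card ↥(D ⊔ N) := by
    rw [aux_card_mul_relindex hNB, hcardB]
  have hrelNDN : Nat.card N * N.relIndex (D ⊔ N) = Nat.card ↥(D ⊔ N) :=
    aux_card_mul_relindex le_sup_right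
  have hrelNB_eq : N.relIndex B = N.relIndex (D ⊔ N) :=
    Nat.eq_of_mul_eq_mul_left hcardNpos (hrelN.trans hrelNDN.symm)
  -- N.relIndex (D ⊔ N) = Nat.card (map Q D)
  have hidx : Nat.card ↥(Subgroup.map Q (D ⊔ N)) = N.relIndex (D ⊔ N) := by
    have h1 : (Subgroup.map Q (D ⊔ N)).index = (D ⊔ N).index := by
      rw [Subgroup.index_map, hkerQ, sup_eq_left.mpr (le_sup_right : N ≤ D ⊔ N),
        MonoidHom.range_eq_top_of_surjective Q (QuotientGroup.mk'_surjective N),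
        Subgroup.index_top, mul_one]
    have h2 : Nat.card ↥(Subgroup.map Q (D ⊔ N)) * (D ⊔ N).index = N.index := by
      rw [← h1, Subgroup.card_mul_index, Subgroup.index_eq_card]
    have h3 : Nat.card N * (N.relIndex (D ⊔ N) * (D ⊔ N).index) = Nat.card N * N.index := by
      rw [← mul_assoc, hrelNDN, Subgroup.card_mul_index, Subgroup.card_mul_index]
    have h4 : N.relIndex (D ⊔ N) * (D ⊔ N).index = N.index :=
      Nat.eq_of_mul_eq_mul_left hcardNpos h3
    have hpos : (D ⊔ N).index ≠ 0 := Subgroup.index_ne_zero_of_finite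
    exact Nat.eq_of_mul_eq_mul_right (Nat.pos_of_ne_zero hpos) (h2.trans h4.symm)
  obtain ⟨k, hk⟩ : ∃ k, Nat.card ↥(Subgroup.map Q (D ⊔ N)) = p ^ k := by
    rw [hmap_sup D]
    exact IsPGroup.iff_card.mp (hD.map Q)
  constructor
  · -- forward direction
    intro h
    have hle : MulAut.conj x • D ≤ B := le_trans le_sup_left h.le
    have hrel : Nat.card D * (MulAut.conj x • D).relIndex B = Nat.card ↥(D ⊔ N) := by
      rw [← hcardxD, aux_card_mul_relindex hle, hcardB]
    have hrelD : Nat.card D * D.relIndex (D ⊔ N) = Nat.card ↥(D ⊔ N) :=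
      aux_card_mul_relindex le_sup_left
    have heq : (MulAut.conj x • D).relIndex B = D.relIndex (D ⊔ N) :=
      Nat.eq_of_mul_eq_mul_left hcardDpos (hrel.trans hrelD.symm)
    refine ⟨hle, ?_⟩
    show ¬ p ∣ (MulAut.conj x • D).relIndex B
    rw [heq]
    exact hSyl
  · -- backward direction
    rintro ⟨hle, hind⟩
    set M : Subgroup G := (MulAut.conj x • D) ⊔ N with hM
    have hMB : M ≤ B := sup_le hle hNB
    have ht1 : (MulAut.conj x • D).relIndex M * M.relIndex B
        = (MulAut.conj x • D).relIndex B :=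
      Subgroup.relIndex_mul_relIndex _ _ _ le_sup_left hMB
    have ht2 : N.relIndex M * M.relIndex B = N.relIndex B :=
      Subgroup.relIndex_mul_relIndex _ _ _ le_sup_right hMB
    have hdvd1 : M.relIndex B ∣ (MulAut.conj x • D).relIndex B := Dvd.intro_left _ ht1
    have hdvd2 : M.relIndex B ∣ p ^ k := by
      rw [← hk, hidx, ← hrelNB_eq]
      exact Dvd.intro_left _ ht2
    have hnp : ¬ p ∣ M.relIndex B := fun hp => hind (hp.trans hdvd1)
    obtain ⟨j, hjk, hj⟩ := (Nat.dvd_prime_pow (Fact.out : p.Prime)).mp hdvd2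
    have hj0 : j = 0 := by
      by_contra hj0
      exact hnp (hj ▸ dvd_pow_self p hj0)
    have hone : M.relIndex B = 1 := by rw [hj, hj0, pow_zero]
    exact le_antisymm hMB (Subgroup.relIndex_eq_one.mp hone)
end

section
/- Let G be a finite group and D a subgroup. For g ∈ G and N a normal subgroup, D ⊆ g(DN)g^{-1} if and only if g ∈ N_G(DN). -/
open scoped Pointwise

/-- for `D` a `p`-subgroup of the finite group `G` which is a Sylow
`p`-subgroup of `DN` (`N` normal), and any `g ∈ G`:
`D ⊆ g(DN)g⁻¹` if and only if `g ∈ N_G(DN)`. -/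
theorem stmt_13 (p : ℕ) [Fact p.Prime] (G : Type*) [Group G] [Finite G]
    (D N : Subgroup G) [N.Normal] (hD : IsPGroup p D)
    (hSyl : ¬ p ∣ (D.subgroupOf (D ⊔ N)).index) (g : G) :
    D ≤ MulAut.conj g • (D ⊔ N) ↔ g ∈ Subgroup.normalizer ((D ⊔ N : Subgroup G) : Set G) := by
  constructor
  · intro hle
    have hN : N ≤ MulAut.conj g • (D ⊔ N) := by
      have h1 : MulAut.conj g • N ≤ MulAut.conj g • (D ⊔ N) :=
        Subgroup.pointwise_smul_le_pointwise_smul_iff.mpr le_sup_right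
      rwa [Subgroup.Normal.conj_smul_eq_self] at h1
    have hsup : D ⊔ N ≤ MulAut.conj g • (D ⊔ N) := sup_le hle hN
    have hcard : Nat.card (MulAut.conj g • (D ⊔ N) : Subgroup G) ≤ Nat.card (D ⊔ N : Subgroup G) :=
      le_of_eq (Nat.card_congr (Subgroup.equivSMul (MulAut.conj g) (D ⊔ N)).toEquiv.symm)
    have heq : D ⊔ N = MulAut.conj g • (D ⊔ N) :=
      Subgroup.eq_of_le_of_card_ge hsup hcard
    rw [Subgroup.mem_normalizer_iff]
    intro h
    constructor
    · intro hh
      have : MulAut.conj g h ∈ MulAut.conj g • (D ⊔ N) :=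
        Subgroup.smul_mem_pointwise_smul h _ _ hh
      rw [← heq] at this
      simpa using this
    · intro hh
      have : MulAut.conj g h ∈ D ⊔ N := by simpa using hh
      rw [heq] at this
      exact Subgroup.smul_mem_pointwise_smul_iff.mp this
  · intro hg
    have heq : MulAut.conj g • (D ⊔ N) = D ⊔ N := by
      ext x
      rw [Subgroup.mem_pointwise_smul_iff_inv_smul_mem]
      have := Subgroup.mem_normalizer_iff.mp hg (g⁻¹ * x * g)
      simpa [MulAut.smul_def, mul_assoc] using this
    rw [heq]
    exact le_sup_left
end
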